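/- Suppose σ : (0,∞) → (0,∞) satisfies: there exist α ∈ (0, 1/4) and k₁ > 0 such that e^{−k}/σ(e^{−k}) ≥ k^{−α} for all k ≥ k₁. Then for every constant c > 0, there exists m₁ ≥ 1 such that for all m ≥ m₁, m^{−1}·σ(1/(m−1)) · exp( c·m⁴·σ(1/m)⁴ ) ≤ m^{−3/2}. -/

import Mathlib

set_option maxHeartbeats 1000000

theorem stmt_3 (σ : ℝ → ℝ) (hpos : ∀ x : ℝ, 0 < x → 0 < σ x)
    (α k₁ : ℝ) (hα0 : 0 < α) (hα : α < 1/4) (hk₁ : 0 < k₁)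
    (hgrowth : ∀ k : ℝ, k₁ ≤ k → k ^ (-α) ≤ Real.exp (-k) / σ (Real.exp (-k))) :
    ∀ c : ℝ, 0 < c → ∃ m₁ : ℕ, 1 ≤ m₁ ∧ ∀ m : ℕ, m₁ ≤ m →
      (m : ℝ)⁻¹ * σ (1 / ((m : ℝ) - 1)) * Real.exp (c * (m : ℝ)^4 * (σ (1 / (m : ℝ)))^4)
        ≤ (m : ℝ) ^ (-(3 : ℝ)/2) := by
  intro c hc
  -- eventual conditions on t = log m
  have h1 : ∀ᶠ t : ℝ in Filter.atTop, 8*c ≤ t ^ (1 - 4*α) :=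
    (tendsto_rpow_atTop (by linarith)).eventually_ge_atTop (8*c)
  have h3 := (h1.and ((Filter.eventually_ge_atTop (64:ℝ)).and
      (Filter.eventually_ge_atTop (8 * Real.log 2)))).and
      (Filter.eventually_ge_atTop k₁)
  rw [Filter.eventually_atTop] at h3
  obtain ⟨T, hT⟩ := h3
  obtain ⟨m₁, hm₁⟩ := exists_nat_ge (max (Real.exp T) (Real.exp k₁ + 2))
  refine ⟨max m₁ 2, by omega, ?_⟩
  intro m hm
  have hm2 : (2:ℕ) ≤ m := le_trans (le_max_right _ _) hm
  have hm2' : (2:ℝ) ≤ (m:ℝ) := by exact_mod_cast hm2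
  have hm1' : (m₁:ℝ) ≤ (m:ℝ) := by exact_mod_cast le_trans (le_max_left _ _) hm
  have hmexpT : Real.exp T ≤ (m:ℝ) := le_trans (le_trans (le_max_left _ _) hm₁) hm1'
  have hmexpk : Real.exp k₁ + 2 ≤ (m:ℝ) := le_trans (le_trans (le_max_right _ _) hm₁) hm1'
  have hmpos : (0:ℝ) < m := by linarith
  have hm1pos : (0:ℝ) < (m:ℝ) - 1 := by linarith
  set t := Real.log m with ht
  have htT : T ≤ t := by
    have := Real.log_le_log (Real.exp_pos T) hmexpT
    rwa [Real.log_exp] at this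
  obtain ⟨⟨hc8, h64, hl2⟩, htk⟩ := hT t htT
  have htpos : (0:ℝ) < t := by linarith
  set k := Real.log ((m:ℝ) - 1) with hk
  have hkk : k₁ ≤ k := by
    have := Real.log_le_log (Real.exp_pos k₁) (by linarith : Real.exp k₁ ≤ (m:ℝ) - 1)
    rwa [Real.log_exp] at this
  have hkt : k ≤ t := Real.log_le_log hm1pos (by linarith)
  have hkpos : (0:ℝ) < k := lt_of_lt_of_le hk₁ hkk
  -- σ bound
  have hσ : ∀ j : ℝ, k₁ ≤ j → σ (Real.exp (-j)) ≤ Real.exp (-j) * j ^ α := by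
    intro j hj
    have hjpos : 0 < j := lt_of_lt_of_le hk₁ hj
    have hspos := hpos _ (Real.exp_pos (-j))
    have h := (le_div_iff₀ hspos).mp (hgrowth j hj)
    have hja : (0:ℝ) < j ^ α := Real.rpow_pos_of_pos hjpos _
    have hid : j ^ (-α) * j ^ α = 1 := by
      rw [← Real.rpow_add hjpos]; simp
    nlinarith [Real.exp_pos (-j)]
  -- bounds at 1/m and 1/(m-1)
  have e1 : (1:ℝ)/(m:ℝ) = Real.exp (-t) := by
    rw [Real.exp_neg, Real.exp_log hmpos, one_div]
  have e2 : (1:ℝ)/((m:ℝ)-1) = Real.exp (-k) := by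
    rw [Real.exp_neg, Real.exp_log hm1pos, one_div]
  have hσm : σ (1/(m:ℝ)) ≤ (1/(m:ℝ)) * t ^ α := by
    rw [e1]; exact hσ t (le_trans (le_refl _) htk)
  have hσm1 : σ (1/((m:ℝ)-1)) ≤ t ^ α / ((m:ℝ)-1) := by
    rw [e2]
    calc σ (Real.exp (-k)) ≤ Real.exp (-k) * k ^ α := hσ k hkk
      _ ≤ Real.exp (-k) * t ^ α := by
          have := Real.rpow_le_rpow hkpos.le hkt hα0.le
          nlinarith [Real.exp_pos (-k)]
      _ = t ^ α / ((m:ℝ)-1) := by rw [← e2]; ring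
  -- exponent bound
  have hA : (m:ℝ) * σ (1/(m:ℝ)) ≤ t ^ α := by
    have h := mul_le_mul_of_nonneg_left hσm hmpos.le
    calc (m:ℝ) * σ (1/(m:ℝ)) ≤ (m:ℝ) * ((1/(m:ℝ)) * t ^ α) := h
      _ = t ^ α := by field_simp
  have hAnn : 0 ≤ (m:ℝ) * σ (1/(m:ℝ)) :=
    mul_nonneg hmpos.le (hpos _ (by positivity)).le
  have hB : (m:ℝ)^4 * σ (1/(m:ℝ))^4 ≤ t ^ (4*α) := by
    have h4 := pow_le_pow_left₀ hAnn hA 4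
    rw [mul_pow] at h4
    have : (t ^ α) ^ (4:ℕ) = t ^ (4*α) := by
      rw [← Real.rpow_natCast (t ^ α) 4, ← Real.rpow_mul htpos.le]
      norm_num; ring_nf
    linarith [h4, this.le, this.ge]
  have hE : Real.exp (c * (m:ℝ)^4 * σ (1/(m:ℝ))^4) ≤ Real.exp (c * t ^ (4*α)) := by
    apply Real.exp_le_exp.mpr
    rw [mul_assoc]
    exact mul_le_mul_of_nonneg_left hB hc.le
  -- key inequality
  have hsqt : Real.sqrt t ≤ t/8 := by
    have h8 : (8:ℝ) ≤ Real.sqrt t := by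
      rw [show (8:ℝ) = Real.sqrt 64 by
        rw [show (64:ℝ) = 8^2 by norm_num, Real.sqrt_sq (by norm_num)]]
      exact Real.sqrt_le_sqrt h64
    nlinarith [Real.sq_sqrt htpos.le, Real.sqrt_nonneg t]
  have hlogt : Real.log t ≤ 2 * Real.sqrt t := by
    have h := Real.log_le_sub_one_of_pos (Real.sqrt_pos.mpr htpos)
    have h2 : Real.log (Real.sqrt t) = Real.log t / 2 := Real.log_sqrt htpos.le
    linarith [Real.sqrt_nonneg t]
  have hct : c * t ^ (4*α) ≤ t/8 := by
    have hpow : t ^ (1-4*α) * t ^ (4*α) = t := by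
      rw [← Real.rpow_add htpos, show 1-4*α+4*α = 1 by ring, Real.rpow_one]
    have hnn : (0:ℝ) ≤ t ^ (4*α) := Real.rpow_nonneg htpos.le _
    have h8 := mul_le_mul_of_nonneg_right hc8 hnn
    rw [hpow] at h8
    linarith
  have hsum : Real.log 2 + Real.log t * α + c * t ^ (4*α) ≤ t/2 := by
    have hlt : 0 ≤ Real.log t := Real.log_nonneg (by linarith)
    nlinarith [Real.sqrt_nonneg t]
  have hkey : 2 * t ^ α * Real.exp (c * t ^ (4*α)) ≤ Real.exp (t/2) := by
    have h2e : (2:ℝ) * t ^ α * Real.exp (c * t ^ (4*α))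
        = Real.exp (Real.log 2 + Real.log t * α + c * t ^ (4*α)) := by
      rw [Real.exp_add, Real.exp_add, Real.exp_log two_pos, Real.rpow_def_of_pos htpos]
    rw [h2e]
    exact Real.exp_le_exp.mpr hsum
  -- final assembly
  have hm12 : (m:ℝ) ^ ((1:ℝ)/2) = Real.exp (t/2) := by
    rw [Real.rpow_def_of_pos hmpos, ← ht]; ring_nf
  have hfin : t ^ α / ((m:ℝ)-1) * Real.exp (c * t ^ (4*α)) ≤ (m:ℝ) ^ (-(1:ℝ)/2) := by
    have hneg : (m:ℝ) ^ (-(1:ℝ)/2) = (Real.exp (t/2))⁻¹ := by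
      rw [show (-(1:ℝ)/2) = -(1/2) by ring, Real.rpow_neg hmpos.le, hm12]
    rw [hneg, div_mul_eq_mul_div, div_le_iff₀ hm1pos]
    have hexpt : Real.exp t = Real.exp (t/2) * Real.exp (t/2) := by
      rw [← Real.exp_add]; ring_nf
    have hem : Real.exp t = (m:ℝ) := Real.exp_log hmpos
    have hE2 := Real.exp_pos (t/2)
    have hinv : (Real.exp (t/2))⁻¹ * Real.exp (t/2) = 1 := inv_mul_cancel₀ hE2.ne'
    have hm1ge : Real.exp (t/2) * Real.exp (t/2) / 2 ≤ (m:ℝ) - 1 := by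
      rw [← hexpt, hem]; linarith
    nlinarith [mul_le_mul_of_nonneg_left hm1ge (inv_nonneg.mpr hE2.le),
      Real.exp_pos (c * t ^ (4*α)), Real.rpow_nonneg htpos.le α]
  have hsplit : (m:ℝ) ^ (-(3:ℝ)/2) = (m:ℝ)⁻¹ * (m:ℝ) ^ (-(1:ℝ)/2) := by
    rw [← Real.rpow_neg_one, ← Real.rpow_add hmpos]; norm_num
  rw [hsplit, mul_assoc]
  apply mul_le_mul_of_nonneg_left _ (inv_nonneg.mpr hmpos.le)
  calc σ (1/((m:ℝ)-1)) * Real.exp (c * (m:ℝ)^4 * σ (1/(m:ℝ))^4)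
      ≤ t ^ α / ((m:ℝ)-1) * Real.exp (c * t ^ (4*α)) := by
        apply mul_le_mul hσm1 hE (Real.exp_pos _).le
        positivity
    _ ≤ (m:ℝ) ^ (-(1:ℝ)/2) := hfin
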